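/- Let G be a finite solvable group and p a prime divisor of |G|. If every complemented chief factor of G that is a p-group is central in G, then G is p-nilpotent (i.e. G has a normal p-complement). -/

import Mathlib

/-- `H/K` is a chief factor of `G`: both are normal in `G`, `K < H`, and there is
no normal subgroup of `G` strictly between them. -/
def IsChiefFactor {G : Type*} [Group G] (H K : Subgroup G) : Prop :=
  H.Normal ∧ K.Normal ∧ K < H ∧
    ∀ L : Subgroup G, L.Normal → K ≤ L → L ≤ H → L = K ∨ L = H

/-- The chief factor `H/K` is complemented, i.e. has a complement in `G/K`. -/
def IsComplementedFactor {G : Type*} [Group G] (H K : Subgroup G) : Prop :=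
  ∃ A : Subgroup G, K ≤ A ∧ A ⊔ H = ⊤ ∧ A ⊓ H = K

open Subgroup MulOpposite MulAction Pointwise
open scoped commutatorElement

set_option linter.unusedSectionVars false

section Conj
variable {G : Type*} [Group G] [Finite G] (H : Subgroup G) [H.Normal] [IsMulCommutative H]

private lemma complement_mem_leftTransversals {K : Subgroup G} (h : H.IsComplement' K) :
    IsComplement (K : Set G) (H : Set G) := by
  exact h.symm

private def mkQD (T : H.LeftTransversal) : H.QuotientDiff := Quotient.mk'' T

private lemma mkQD_smul (g : G) (T : H.LeftTransversal) :
    g • mkQD H T = mkQD H (op g⁻¹ • T) := rfl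

variable {H}

private lemma smul_set_of_mem {K : Subgroup G} {k : G} (hk : k ∈ K) :
    (op k⁻¹ • (K : Set G)) = (K : Set G) := by
  ext x
  simp only [Set.mem_smul_set, MulOpposite.smul_eq_mul_unop, MulOpposite.unop_op, SetLike.mem_coe]
  constructor
  · rintro ⟨y, hy, rfl⟩; exact K.mul_mem hy (K.inv_mem hk)
  · intro hx; exact ⟨x * k, K.mul_mem hx hk, by group⟩

/-- Conjugacy of complements of an abelian normal Hall subgroup (Schur-Zassenhaus). -/
private lemma conj_of_isComplement' (hco : Nat.Coprime (Nat.card H) H.index)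
    {K₁ K₂ : Subgroup G} (h1 : H.IsComplement' K₁) (h2 : H.IsComplement' K₂) :
    ∃ h : G, h ∈ H ∧ K₂ = K₁.map (MulAut.conj h).toMonoidHom := by
  set α : H.QuotientDiff := mkQD H ⟨(K₁ : Set G), complement_mem_leftTransversals H h1⟩ with hα
  set β : H.QuotientDiff := mkQD H ⟨(K₂ : Set G), complement_mem_leftTransversals H h2⟩ with hβ
  have hstab : ∀ (K : Subgroup G) (h : H.IsComplement' K),
      K = stabilizer G (mkQD H ⟨(K : Set G), complement_mem_leftTransversals H h⟩) := by
    intro K h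
    set T : H.LeftTransversal :=
      ⟨(K : Set G), complement_mem_leftTransversals H h⟩
    have hle : K ≤ stabilizer G (mkQD H T) := by
      intro k hk
      show k • (mkQD H T) = _
      rw [mkQD_smul]
      congr 1
      exact Subtype.ext (smul_set_of_mem hk)
    have hcomp : H.IsComplement' (stabilizer G (mkQD H T)) :=
      isComplement'_stabilizer_of_coprime hco
    refine Subgroup.eq_of_le_of_card_ge hle ?_
    have c1 := h.card_mul
    have c2 := hcomp.card_mul
    have hH : 0 < Nat.card H := Nat.card_pos
    exact le_of_eq (Nat.eq_of_mul_eq_mul_left hH (c2.trans c1.symm))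
  obtain ⟨h, hh⟩ := Subgroup.exists_smul_eq hco α β
  refine ⟨h, h.2, ?_⟩
  rw [hstab K₂ h2, ← hβ, ← hh, hα, Subgroup.smul_def,
    MulAction.stabilizer_smul_eq_stabilizer_map_conj]
  congr 1
  exact (hstab K₁ h1).symm
end Conj

section Helpers
variable {G : Type*} [Group G]

private lemma my_card_map_dvd [Finite G] {G' : Type*} [Group G'] (K : Subgroup G) (f : G →* G') :
    Nat.card (K.map f) ∣ Nat.card K := by
  have h1 : Nat.card K = Nat.card (↥K ⧸ (f.domRestrict K).ker) * Nat.card (f.domRestrict K).ker :=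
    Subgroup.card_eq_card_quotient_mul_card_subgroup _
  have h2 : Nat.card (↥K ⧸ (f.domRestrict K).ker) = Nat.card (K.map f) := by
    rw [← MonoidHom.restrict_range K f]
    exact Nat.card_congr (QuotientGroup.quotientKerEquivRange (f.domRestrict K)).toEquiv
  exact ⟨_, by rw [h1, h2]⟩

private lemma card_comap_eq [Finite G] {Q : Type*} [Group Q] (π : G →* Q)
    (hs : Function.Surjective π) (X : Subgroup Q) :
    Nat.card (Subgroup.comap π X) = Nat.card X * Nat.card π.ker := by
  set C := Subgroup.comap π X with hC
  have hker : π.ker ≤ C := Subgroup.ker_le_comap π X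
  have h1 : Nat.card C = Nat.card (↥C ⧸ (π.domRestrict C).ker) * Nat.card (π.domRestrict C).ker :=
    Subgroup.card_eq_card_quotient_mul_card_subgroup _
  have h2 : Nat.card (↥C ⧸ (π.domRestrict C).ker) = Nat.card X := by
    calc Nat.card (↥C ⧸ (π.domRestrict C).ker) = Nat.card (π.domRestrict C).range :=
          Nat.card_congr (QuotientGroup.quotientKerEquivRange (π.domRestrict C)).toEquiv
      _ = Nat.card (C.map π) := by rw [MonoidHom.restrict_range C π]
      _ = Nat.card X := by rw [hC, Subgroup.map_comap_eq_self_of_surjective hs]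
  have h3 : Nat.card (π.domRestrict C).ker = Nat.card π.ker := by
    rw [MonoidHom.ker_restrict]
    exact Nat.card_congr (Subgroup.subgroupOfEquivOfLe hker).toEquiv
  rw [h1, h2, h3]

private lemma exists_minimal_normal [Finite G] [Nontrivial G] :
    ∃ N : Subgroup G, N.Normal ∧ N ≠ ⊥ ∧
      ∀ L : Subgroup G, L.Normal → L ≤ N → L = ⊥ ∨ L = N := by
  obtain ⟨N, ⟨hN, hbot⟩, hmin⟩ :=
    (IsWellFounded.wf : WellFounded ((· < ·) : Subgroup G → Subgroup G → Prop)).has_min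
      {N : Subgroup G | N.Normal ∧ N ≠ ⊥} ⟨⊤, inferInstance, by simp⟩
  refine ⟨N, hN, hbot, fun L hL hle => ?_⟩
  by_cases hLbot : L = ⊥
  · exact Or.inl hLbot
  · right
    rcases lt_or_eq_of_le hle with hlt | he
    · exact absurd hlt (hmin L ⟨hL, hLbot⟩)
    · exact he

private lemma map_subtype_top' (N : Subgroup G) : Subgroup.map N.subtype ⊤ = N := by
  rw [← MonoidHom.range_eq_map, Subgroup.range_subtype]

private lemma minimal_normal_isCommutative [Group.IsSolvable G] {N : Subgroup G} (hN : N.Normal)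
    (hbot : N ≠ ⊥) (hmin : ∀ L : Subgroup G, L.Normal → L ≤ N → L = ⊥ ∨ L = N) :
    IsMulCommutative N := by
  haveI := hN
  have hcomm : ⁅N, N⁆.Normal := Subgroup.commutator_normal N N
  have hle : ⁅N, N⁆ ≤ N := Subgroup.commutator_le_left N N
  rcases hmin _ hcomm hle with h | h
  · constructor; constructor
    intro a b
    have hmem : ⁅(a : G), (b : G)⁆ ∈ ⁅N, N⁆ := Subgroup.commutator_mem_commutator a.2 b.2
    rw [h, Subgroup.mem_bot] at hmem
    exact Subtype.ext (commutatorElement_eq_one_iff_mul_comm.mp hmem)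
  · exfalso
    have key : ∀ n, derivedSeries ↥N n = ⊤ := by
      intro n; induction n with
      | zero => rfl
      | succ n ih =>
        rw [derivedSeries_succ, ih]
        apply Subgroup.map_injective N.subtype_injective
        rw [Subgroup.map_commutator, map_subtype_top', h]
    obtain ⟨n, hn⟩ := (inferInstance : Group.IsSolvable ↥N).solvable
    haveI : Nontrivial ↥N := (Subgroup.nontrivial_iff_ne_bot N).mpr hbot
    exact bot_ne_top ((key n).symm.trans hn).symm

private lemma minimal_normal_card_pow [Finite G] {N : Subgroup G} (hN : N.Normal)
    (hbot : N ≠ ⊥) (hmin : ∀ L : Subgroup G, L.Normal → L ≤ N → L = ⊥ ∨ L = N)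
    (hcomm : IsMulCommutative N) :
    ∃ q a : ℕ, q.Prime ∧ 1 ≤ a ∧ Nat.card N = q ^ a := by
  haveI := hN; haveI := hcomm
  have h1 : 1 < Nat.card N := (Subgroup.one_lt_card_iff_ne_bot N).mpr hbot
  set q := (Nat.card N).minFac with hqdef
  have hq : q.Prime := Nat.minFac_prime (by omega)
  haveI : Fact q.Prime := ⟨hq⟩
  obtain ⟨P⟩ : Nonempty (Sylow q ↥N) := inferInstance
  have hPcard : Nat.card (P : Subgroup ↥N) = q ^ (Nat.card ↥N).factorization q :=
    P.card_eq_multiplicity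
  have hfe : 1 ≤ (Nat.card ↥N).factorization q := by
    have := Nat.Prime.factorization_pos_of_dvd hq (by omega : Nat.card ↥N ≠ 0)
      (Nat.minFac_dvd _)
    omega
  have hPnormal : (P : Subgroup ↥N).Normal := by
    constructor
    intro n hn g
    have hc : (g : G) * (n : G) = (n : G) * (g : G) :=
      Subgroup.mul_comm_of_mem_isMulCommutative N g.2 n.2
    have : g * n * g⁻¹ = n := by
      apply Subtype.ext
      push_cast
      rw [hc]; group
    rw [this]; exact hn
  haveI := Sylow.characteristic_of_normal P hPnormal
  have hmapn : ((P : Subgroup ↥N).map N.subtype).Normal := inferInstance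
  have hcardmap : Nat.card ((P : Subgroup ↥N).map N.subtype) = q ^ (Nat.card ↥N).factorization q := by
    rw [← hPcard]
    exact (Nat.card_congr (Subgroup.equivMapOfInjective _ _ N.subtype_injective).toEquiv).symm
  rcases hmin _ hmapn (Subgroup.map_subtype_le _) with h | h
  · exfalso
    rw [h, Subgroup.card_bot] at hcardmap
    have := Nat.one_lt_pow (n := (Nat.card ↥N).factorization q) (by omega) hq.one_lt
    omega
  · refine ⟨q, (Nat.card ↥N).factorization q, hq, hfe, ?_⟩
    conv_lhs => rw [← h]
    exact hcardmap

end Helpers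

private lemma dvd_coprime_eq_one {d x y : ℕ} (h : Nat.Coprime x y) (h1 : d ∣ x) (h2 : d ∣ y) :
    d = 1 := Nat.eq_one_of_dvd_one (by rw [← h.gcd_eq_one]; exact Nat.dvd_gcd h1 h2)

universe u

private theorem main_aux (n : ℕ) : ∀ (G : Type u) [Group G] [Finite G] [Group.IsSolvable G],
    Nat.card G = n → ∀ p : ℕ, p.Prime →
    (∀ H K : Subgroup G, IsChiefFactor H K → IsComplementedFactor H K →
      (∃ m : ℕ, Nat.card H = Nat.card K * p ^ m) →
      ⁅(⊤ : Subgroup G), H⁆ ≤ K) →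
    ∃ N : Subgroup G, N.Normal ∧ ¬ p ∣ Nat.card N ∧ ∃ k : ℕ, N.index = p ^ k := by
  induction n using Nat.strong_induction_on with
  | _ n IH =>
  intro G _ _ _ hn p hp hyp
  rcases subsingleton_or_nontrivial G with hG | hG
  · refine ⟨⊥, inferInstance, ?_, 0, ?_⟩
    · rw [Subgroup.card_bot]; exact hp.not_dvd_one
    · rw [Subgroup.index_bot, pow_zero]
      exact Nat.card_eq_one_iff_unique.mpr ⟨hG, inferInstance⟩
  · obtain ⟨N₀, hN₀, hbot, hmin⟩ := exists_minimal_normal (G := G)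
    haveI := hN₀
    have hNcomm := minimal_normal_isCommutative hN₀ hbot hmin
    haveI := hNcomm
    obtain ⟨q, a, hq, ha, hcardN₀⟩ := minimal_normal_card_pow hN₀ hbot hmin hNcomm
    set π := QuotientGroup.mk' N₀ with hπdef
    have hπs : Function.Surjective π := QuotientGroup.mk'_surjective N₀
    have hker : π.ker = N₀ := QuotientGroup.ker_mk' N₀
    have hcardG : Nat.card G = Nat.card (G ⧸ N₀) * Nat.card N₀ :=
      Subgroup.card_eq_card_quotient_mul_card_subgroup N₀
    have hN₀pos : 1 < Nat.card N₀ := (Subgroup.one_lt_card_iff_ne_bot N₀).mpr hbot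
    have hQpos : 0 < Nat.card (G ⧸ N₀) := Nat.card_pos
    have hlt : Nat.card (G ⧸ N₀) < n := by
      rw [← hn, hcardG]
      exact (Nat.lt_mul_iff_one_lt_right hQpos).mpr hN₀pos
    have hyp' : ∀ H K : Subgroup (G ⧸ N₀), IsChiefFactor H K → IsComplementedFactor H K →
        (∃ m : ℕ, Nat.card H = Nat.card K * p ^ m) →
        ⁅(⊤ : Subgroup (G ⧸ N₀)), H⁆ ≤ K := by
      intro Hb Kb hchief hcompl hpow
      obtain ⟨hHbn, hKbn, hKHlt, hbetween⟩ := hchief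
      haveI := hHbn; haveI := hKbn
      set H := Subgroup.comap π Hb with hH
      set K := Subgroup.comap π Kb with hK
      have hmapH : Subgroup.map π H = Hb := Subgroup.map_comap_eq_self_of_surjective hπs _
      have hmapK : Subgroup.map π K = Kb := Subgroup.map_comap_eq_self_of_surjective hπs _
      have hkerK : π.ker ≤ K := Subgroup.ker_le_comap π Kb
      have hchief' : IsChiefFactor H K := by
        refine ⟨Subgroup.normal_comap π, Subgroup.normal_comap π, ?_, ?_⟩
        · rcases lt_iff_le_and_ne.mp hKHlt with ⟨hle, hne⟩
          refine lt_iff_le_and_ne.mpr ⟨Subgroup.comap_mono hle, fun h => hne ?_⟩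
          rw [← hmapK, ← hmapH, h]
        · intro L hL hKL hLH
          have hkerL : π.ker ≤ L := le_trans hkerK hKL
          have hmL : (Subgroup.map π L).Normal := hL.map π hπs
          have h1 : Kb ≤ Subgroup.map π L := by rw [← hmapK]; exact Subgroup.map_mono hKL
          have h2 : Subgroup.map π L ≤ Hb := by rw [← hmapH]; exact Subgroup.map_mono hLH
          rcases hbetween _ hmL h1 h2 with h | h
          · left; rw [← Subgroup.comap_map_eq_self hkerL, h]
          · right; rw [← Subgroup.comap_map_eq_self hkerL, h]
      have hcompl' : IsComplementedFactor H K := by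
        obtain ⟨Ab, hKA, hsup, hinf⟩ := hcompl
        refine ⟨Subgroup.comap π Ab, Subgroup.comap_mono hKA, ?_, ?_⟩
        · rw [Subgroup.comap_sup_eq π Ab Hb hπs, hsup, Subgroup.comap_top]
        · rw [← Subgroup.comap_inf, hinf]
      have hpow' : ∃ m : ℕ, Nat.card H = Nat.card K * p ^ m := by
        obtain ⟨m, hm⟩ := hpow
        refine ⟨m, ?_⟩
        rw [hH, hK, card_comap_eq π hπs, card_comap_eq π hπs, hm]
        ring
      have hcc := hyp H K hchief' hcompl' hpow'
      calc ⁅(⊤ : Subgroup (G ⧸ N₀)), Hb⁆ = Subgroup.map π ⁅⊤, H⁆ := by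
            rw [Subgroup.map_commutator, Subgroup.map_top_of_surjective π hπs, hmapH]
        _ ≤ Subgroup.map π K := Subgroup.map_mono hcc
        _ = Kb := hmapK
    obtain ⟨Mb, hMbn, hMbp, k, hMbk⟩ := IH _ hlt (G ⧸ N₀) rfl p hp hyp'
    haveI := hMbn
    set m := Nat.card Mb with hmdef
    have hm0 : 0 < m := Nat.card_pos
    have hQcard : Nat.card (G ⧸ N₀) = m * p ^ k := by
      rw [← Subgroup.card_mul_index Mb, hMbk]
    set M := Subgroup.comap π Mb with hMdef
    haveI : M.Normal := Subgroup.normal_comap π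
    have hMcard : Nat.card M = m * Nat.card N₀ := by
      rw [hMdef, card_comap_eq π hπs, hker]
    have hMidx : M.index = p ^ k := by
      rw [hMdef, Subgroup.index_comap_of_surjective _ hπs, hMbk]
    by_cases hqp : q = p
    · -- N₀ is a p-group
      rw [hqp] at hcardN₀
      by_cases hm1 : m = 1
      · refine ⟨⊥, inferInstance, ?_, k + a, ?_⟩
        · rw [Subgroup.card_bot]; exact hp.not_dvd_one
        · rw [Subgroup.index_bot, hcardG, hQcard, hcardN₀, hm1, one_mul, pow_add]
      · -- the hard case
        have hpm : ¬ p ∣ m := hMbp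
        have hN₀M : N₀ ≤ M := hker ▸ Subgroup.ker_le_comap π Mb
        set N' := N₀.subgroupOf M with hN'def
        haveI hN'n : N'.Normal := Subgroup.normal_subgroupOf
        haveI hN'c : IsMulCommutative N' := Subgroup.subgroupOf_isMulCommutative (H := N₀) (K := M)
        have hcardN' : Nat.card N' = p ^ a := by
          rw [← hcardN₀]
          exact Nat.card_congr (Subgroup.subgroupOfEquivOfLe hN₀M).toEquiv
        have hpa : 0 < p ^ a := pow_pos hp.pos a
        have hidxN' : N'.index = m := by
          have h1 := Subgroup.card_mul_index N'
          rw [hcardN', hMcard, hcardN₀] at h1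
          exact Nat.eq_of_mul_eq_mul_left hpa (h1.trans (mul_comm _ _))
        have hcop : (Nat.card N').Coprime N'.index := by
          rw [hcardN', hidxN']
          exact Nat.Coprime.pow_left a ((Nat.Prime.coprime_iff_not_dvd hp).mpr hpm)
        obtain ⟨K₀, hK₀⟩ := Subgroup.exists_right_complement'_of_coprime hcop
        have hcardK₀ : Nat.card K₀ = m := by
          have h2 := hK₀.card_mul
          rw [hcardN', hMcard, hcardN₀] at h2
          exact Nat.eq_of_mul_eq_mul_left hpa (h2.trans (mul_comm _ _))
        set H' := K₀.map M.subtype with hH'def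
        have hH'M : H' ≤ M := Subgroup.map_subtype_le K₀
        have hcardH' : Nat.card H' = m := by
          rw [← hcardK₀, hH'def]
          exact (Nat.card_congr (Subgroup.equivMapOfInjective _ _ M.subtype_injective).toEquiv).symm
        have hMconj : ∀ g : G, H'.map (MulAut.conj g).toMonoidHom ≤ M := by
          intro g x hx
          obtain ⟨y, hy, rfl⟩ := hx
          have he : (MulAut.conj g).toMonoidHom y = g * y * g⁻¹ := rfl
          rw [he]
          exact Subgroup.Normal.conj_mem ‹M.Normal› y (hH'M hy) g
        have hcardKg : ∀ g : G,
            Nat.card ((H'.map (MulAut.conj g).toMonoidHom).subgroupOf M) = m := by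
          intro g
          have e1 : Nat.card ((H'.map (MulAut.conj g).toMonoidHom).subgroupOf M)
              = Nat.card (H'.map (MulAut.conj g).toMonoidHom) :=
            Nat.card_congr (Subgroup.subgroupOfEquivOfLe (hMconj g)).toEquiv
          have e2 : Nat.card (H'.map (MulAut.conj g).toMonoidHom) = Nat.card H' :=
            (Nat.card_congr
              (Subgroup.equivMapOfInjective _ _ (MulAut.conj g).injective).toEquiv).symm
          rw [e1, e2, hcardH']
        have hcompg : ∀ g : G,
            N'.IsComplement' ((H'.map (MulAut.conj g).toMonoidHom).subgroupOf M) := by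
          intro g
          apply Subgroup.isComplement'_of_coprime
          · rw [hcardN', hcardKg g, hMcard, hcardN₀]; ring
          · rw [hcardN', hcardKg g]
            exact Nat.Coprime.pow_left a ((Nat.Prime.coprime_iff_not_dvd hp).mpr hpm)
        have hback : ∀ g : G,
            ((H'.map (MulAut.conj g).toMonoidHom).subgroupOf M).map M.subtype
              = H'.map (MulAut.conj g).toMonoidHom := by
          intro g
          rw [Subgroup.subgroupOf_map_subtype]
          exact inf_of_le_left (hMconj g)
        have hH'normal : H'.Normal := by
          by_cases hcc : IsComplementedFactor N₀ ⊥
          · -- complemented, hence central, case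
            have hchiefN₀ : IsChiefFactor N₀ ⊥ :=
              ⟨hN₀, inferInstance, bot_lt_iff_ne_bot.mpr hbot, fun L hL _ hLN => hmin L hL hLN⟩
            have hcen := hyp N₀ ⊥ hchiefN₀ hcc
              ⟨a, by rw [Subgroup.card_bot, one_mul, hcardN₀]⟩
            have hcen' : ∀ (g x : G), x ∈ N₀ → g * x = x * g := by
              intro g x hx
              have h1 : ⁅g, x⁆ ∈ (⊥ : Subgroup G) :=
                hcen (Subgroup.commutator_mem_commutator (Subgroup.mem_top g) hx)
              exact commutatorElement_eq_one_iff_mul_comm.mp (Subgroup.mem_bot.mp h1)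
            have hK₀set : Subgroup.IsComplement (N' : Set ↥M) (K₀ : Set ↥M) := hK₀
            haveI hK₀n : K₀.Normal := by
              constructor
              intro kk hkk y
              obtain ⟨⟨nn, bb⟩, hab⟩ := (hK₀set.existsUnique y).exists
              have hnnN₀ : ((nn : ↥M) : G) ∈ N₀ := Subgroup.mem_subgroupOf.mp nn.2
              have hcomm_n : ∀ z : ↥M, (nn : ↥M) * z = z * (nn : ↥M) := by
                intro z
                apply Subtype.ext
                push_cast
                exact (hcen' (z : G) ((nn : ↥M) : G) hnnN₀).symm
              have hw : (bb : ↥M) * kk * (bb : ↥M)⁻¹ ∈ K₀ :=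
                K₀.mul_mem (K₀.mul_mem bb.2 hkk) (K₀.inv_mem bb.2)
              have heq : y * kk * y⁻¹ = (bb : ↥M) * kk * (bb : ↥M)⁻¹ := by
                rw [← hab]
                calc ((nn : ↥M) * (bb : ↥M)) * kk * ((nn : ↥M) * (bb : ↥M))⁻¹
                    = (nn : ↥M) * ((bb : ↥M) * kk * (bb : ↥M)⁻¹) * (nn : ↥M)⁻¹ := by group
                  _ = ((bb : ↥M) * kk * (bb : ↥M)⁻¹) * (nn : ↥M) * (nn : ↥M)⁻¹ := by
                      rw [hcomm_n]
                  _ = (bb : ↥M) * kk * (bb : ↥M)⁻¹ := by group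
              rw [heq]
              exact hw
            have hQK₀ : Nat.card (↥M ⧸ K₀) = p ^ a := by
              have h1 : Nat.card ↥M = Nat.card (↥M ⧸ K₀) * Nat.card K₀ :=
                Subgroup.card_eq_card_quotient_mul_card_subgroup K₀
              rw [hMcard, hcardN₀, hcardK₀] at h1
              have := Nat.eq_of_mul_eq_mul_left hm0
                ((mul_comm (Nat.card (↥M ⧸ K₀)) m) ▸ h1.symm)
              omega
            have hle : ∀ g : G, H'.map (MulAut.conj g).toMonoidHom ≤ H' := by
              intro g
              have hKgK₀ : ((H'.map (MulAut.conj g).toMonoidHom).subgroupOf M) ≤ K₀ := by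
                have hcopmp : Nat.Coprime m (p ^ a) :=
                  (Nat.Coprime.pow_left a ((Nat.Prime.coprime_iff_not_dvd hp).mpr hpm)).symm
                have d1 : Nat.card ((((H'.map (MulAut.conj g).toMonoidHom).subgroupOf M)).map
                    (QuotientGroup.mk' K₀)) ∣ m := by
                  rw [← hcardKg g]; exact my_card_map_dvd _ _
                have d2 : Nat.card ((((H'.map (MulAut.conj g).toMonoidHom).subgroupOf M)).map
                    (QuotientGroup.mk' K₀)) ∣ p ^ a := by
                  rw [← hQK₀]; exact Subgroup.card_subgroup_dvd_card _
                have himg := dvd_coprime_eq_one hcopmp d1 d2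
                have hbotimg := Subgroup.card_eq_one.mp himg
                rw [Subgroup.map_eq_bot_iff] at hbotimg
                rwa [QuotientGroup.ker_mk'] at hbotimg
              calc H'.map (MulAut.conj g).toMonoidHom
                  = ((H'.map (MulAut.conj g).toMonoidHom).subgroupOf M).map M.subtype :=
                    (hback g).symm
                _ ≤ K₀.map M.subtype := Subgroup.map_mono hKgK₀
                _ = H' := hH'def.symm
            constructor
            intro h hh g
            exact hle g ⟨h, hh, rfl⟩
          · -- non-complemented (Frattini) case
            have hconjset : ∀ g : G, ∃ x ∈ N₀,
                H'.map (MulAut.conj g).toMonoidHom = H'.map (MulAut.conj x).toMonoidHom := by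
              intro g
              obtain ⟨h, hhN', heq⟩ := conj_of_isComplement' hcop hK₀ (hcompg g)
              refine ⟨(h : G), Subgroup.mem_subgroupOf.mp hhN', ?_⟩
              have hcomp2 : M.subtype.comp (MulAut.conj h).toMonoidHom
                  = (MulAut.conj (h : G)).toMonoidHom.comp M.subtype := by
                ext z; rfl
              calc H'.map (MulAut.conj g).toMonoidHom
                  = ((H'.map (MulAut.conj g).toMonoidHom).subgroupOf M).map M.subtype :=
                    (hback g).symm
                _ = (K₀.map (MulAut.conj h).toMonoidHom).map M.subtype := by rw [heq]
                _ = K₀.map (M.subtype.comp (MulAut.conj h).toMonoidHom) := Subgroup.map_map _ _ _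
                _ = K₀.map ((MulAut.conj (h : G)).toMonoidHom.comp M.subtype) := by rw [hcomp2]
                _ = (K₀.map M.subtype).map (MulAut.conj (h : G)).toMonoidHom :=
                    (Subgroup.map_map _ _ _).symm
                _ = H'.map (MulAut.conj (h : G)).toMonoidHom := by rw [← hH'def]
            have hnorm_mem : ∀ g x : G,
                H'.map (MulAut.conj g).toMonoidHom = H'.map (MulAut.conj x).toMonoidHom →
                x⁻¹ * g ∈ Subgroup.normalizer (H' : Set G) := by
              intro g x he
              rw [Subgroup.mem_normalizer_iff]
              intro y
              constructor
              · intro hy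
                have h1 : g * y * g⁻¹ ∈ H'.map (MulAut.conj g).toMonoidHom := ⟨y, hy, rfl⟩
                rw [he] at h1
                obtain ⟨z, hz, hz2⟩ := h1
                have hz2' : x * z * x⁻¹ = g * y * g⁻¹ := hz2
                have hkey : x⁻¹ * g * y * (x⁻¹ * g)⁻¹ = z := by
                  calc x⁻¹ * g * y * (x⁻¹ * g)⁻¹ = x⁻¹ * (g * y * g⁻¹) * x := by group
                    _ = x⁻¹ * (x * z * x⁻¹) * x := by rw [hz2']
                    _ = z := by group
                rw [hkey]
                exact hz
              · intro hy
                have h1 : x * (x⁻¹ * g * y * (x⁻¹ * g)⁻¹) * x⁻¹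
                    ∈ H'.map (MulAut.conj x).toMonoidHom := ⟨_, hy, rfl⟩
                rw [← he] at h1
                obtain ⟨z, hz, hz2⟩ := h1
                have hz2' : g * z * g⁻¹ = x * (x⁻¹ * g * y * (x⁻¹ * g)⁻¹) * x⁻¹ := hz2
                have h3 : x * (x⁻¹ * g * y * (x⁻¹ * g)⁻¹) * x⁻¹ = g * y * g⁻¹ := by group
                rw [h3] at hz2'
                have : z = y := by
                  have := mul_left_cancel (mul_right_cancel hz2')
                  exact this
                rwa [← this]
            have hsup : N₀ ⊔ Subgroup.normalizer (H' : Set G) = ⊤ := by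
              rw [eq_top_iff]
              intro g _
              obtain ⟨x, hx, he⟩ := hconjset g
              have hgx : g = x * (x⁻¹ * g) := by group
              rw [hgx]
              exact Subgroup.mul_mem_sup hx (hnorm_mem g x he)
            rcases eq_top_or_exists_le_coatom (Subgroup.normalizer (H' : Set G)) with h | ⟨A, hA, hSA⟩
            · exact Subgroup.normalizer_eq_top_iff.mp h
            · exfalso
              have hN₀A : N₀ ≤ A := by
                by_contra hno
                have hsupA : A ⊔ N₀ = ⊤ :=
                  hA.2 _ (lt_of_le_of_ne le_sup_left (fun hh => hno (le_sup_right.trans hh.ge)))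
                have hinfN : (A ⊓ N₀).Normal := by
                  constructor
                  intro h hh g
                  have hgsup : g ∈ A ⊔ N₀ := hsupA ▸ Subgroup.mem_top g
                  have hgset : g ∈ ((A : Set G) * (N₀ : Set G)) := by
                    rw [← Subgroup.mul_normal A N₀]
                    exact hgsup
                  obtain ⟨a', ha', n', hn', rfl⟩ := hgset
                  have hcn : n' * h * n'⁻¹ = h := by
                    have := Subgroup.mul_comm_of_mem_isMulCommutative N₀ hn' hh.2
                    rw [this]; group
                  have h2 : (a' * n') * h * (a' * n')⁻¹ = a' * (n' * h * n'⁻¹) * a'⁻¹ := by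
                    group
                  rw [h2, hcn]
                  exact ⟨A.mul_mem (A.mul_mem ha' hh.1) (A.inv_mem ha'),
                    Subgroup.Normal.conj_mem hN₀ h hh.2 a'⟩
                rcases hmin _ hinfN inf_le_right with hb | hb
                · exact hcc ⟨A, bot_le, hsupA, hb⟩
                · exact hno (hb ▸ inf_le_left)
              have htopA : (⊤ : Subgroup G) ≤ A := hsup ▸ sup_le hN₀A hSA
              exact hA.1 (top_le_iff.mp htopA)
        haveI := hH'normal
        refine ⟨H', inferInstance, ?_, k + a, ?_⟩
        · rw [hcardH']; exact hpm
        · have h1 := Subgroup.card_mul_index H'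
          rw [hcardH', hcardG, hQcard, hcardN₀] at h1
          have h2 : m * H'.index = m * p ^ (k + a) := by
            rw [h1, pow_add]; ring
          exact Nat.eq_of_mul_eq_mul_left hm0 h2
    · -- q ≠ p : easy case
      refine ⟨M, inferInstance, ?_, k, hMidx⟩
      rw [hMcard, hcardN₀]
      intro hdvd
      rcases (Nat.Prime.dvd_mul hp).mp hdvd with h | h
      · exact hMbp h
      · exact hqp ((Nat.prime_dvd_prime_iff_eq hp hq).mp (hp.dvd_of_dvd_pow h)).symm

theorem stmt6 (G : Type*) [Group G] [Finite G] [Group.IsSolvable G]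
    (p : ℕ) (hp : p.Prime) (hdvd : p ∣ Nat.card G)
    (hyp : ∀ H K : Subgroup G, IsChiefFactor H K → IsComplementedFactor H K →
      (∃ n : ℕ, Nat.card H = Nat.card K * p ^ n) →
      ⁅(⊤ : Subgroup G), H⁆ ≤ K) :
    ∃ N : Subgroup G, N.Normal ∧ ¬ p ∣ Nat.card N ∧ ∃ k : ℕ, N.index = p ^ k :=
  main_aux (Nat.card G) G rfl p hp hyp
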